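/- Let μ be a probability measure on Y, A ⊆ Y measurable with μ(A) > 0, and 𝒫₁, 𝒫₂, 𝒫₃ finite measurable partitions. For 0 < ε < 1, COV_{μ, ε, 𝒫₁ | 𝒫₃}(A) ≤ COV_{μ, ε²/6, 𝒫₁ | 𝒫₂}(A) · COV_{μ, ε²/6, 𝒫₂ | 𝒫₃}(A). -/

import Mathlib

open MeasureTheory
open scoped ENNReal

/-- `P` is a finite measurable partition of `Y`. -/
def IsPartition {Y : Type*} [MeasurableSpace Y] (P : Finset (Set Y)) : Prop :=
  (∀ s ∈ P, MeasurableSet s) ∧ (⋃ s ∈ P, s) = Set.univ ∧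
    ∀ s ∈ P, ∀ t ∈ P, s ≠ t → Disjoint s t

/-- The ε-covering number `COV_{μ,ε,P}(A)`. -/
noncomputable def covNum {Y : Type*} [MeasurableSpace Y] (μ : Measure Y) (ε : ℝ)
    (P : Finset (Set Y)) (A : Set Y) : ℕ :=
  sInf {m | ∃ G ⊆ P, G.card = m ∧
    μ ((⋃ s ∈ G, s) ∩ A) ≥ (1 - ENNReal.ofReal ε) * μ A}

/-- The relative ε-covering number `COV_{μ,ε,P|Q}(A)`. -/
noncomputable def relCovNum {Y : Type*} [MeasurableSpace Y] (μ : Measure Y) (ε : ℝ)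
    (P Q : Finset (Set Y)) (A : Set Y) : ℕ :=
  sInf {m | ∃ Q' ⊆ Q, μ ((⋃ s ∈ Q', s) ∩ A) ≥ (1 - ENNReal.ofReal ε) * μ A ∧
    ∀ q ∈ Q', covNum μ ε P (A ∩ q) ≤ m}

lemma measure_diff_le_of_inter {Y : Type*} [MeasurableSpace Y] (μ : Measure Y) {U x : Set Y}
    (hU : MeasurableSet U) {c : ℝ≥0∞} (hc : c ≤ 1) (hx : μ x ≠ ⊤)
    (h : (1 - c) * μ x ≤ μ (U ∩ x)) : μ (x \ U) ≤ c * μ x := by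
  have key : μ (x ∩ U) + μ (x \ U) = μ x := measure_inter_add_diff x hU
  have hfin : μ (x ∩ U) ≠ ⊤ := ne_top_of_le_ne_top hx (measure_mono Set.inter_subset_left)
  have heq : μ (x \ U) = μ x - μ (x ∩ U) :=
    ENNReal.eq_sub_of_add_eq hfin (by rw [add_comm]; exact key)
  have h' : (1 - c) * μ x ≤ μ (x ∩ U) := by rwa [Set.inter_comm] at h
  rw [heq, tsub_le_iff_left]
  calc μ x = ((1 - c) + c) * μ x := by rw [tsub_add_cancel_of_le hc, one_mul]
    _ = (1 - c) * μ x + c * μ x := by rw [add_mul]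
    _ ≤ μ (x ∩ U) + c * μ x := add_le_add_left h' _

lemma inter_ge_of_measure_diff_le {Y : Type*} [MeasurableSpace Y] (μ : Measure Y) {U x : Set Y}
    (hU : MeasurableSet U) {c : ℝ≥0∞} (hx : μ x ≠ ⊤)
    (h : μ (x \ U) ≤ c * μ x) : (1 - c) * μ x ≤ μ (U ∩ x) := by
  have key : μ (x ∩ U) + μ (x \ U) = μ x := measure_inter_add_diff x hU
  have h1 : (1 - c) * μ x = 1 * μ x - c * μ x := ENNReal.sub_mul (fun _ _ => hx)
  rw [Set.inter_comm, h1, one_mul, tsub_le_iff_right]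
  calc μ x = μ (x ∩ U) + μ (x \ U) := key.symm
    _ ≤ μ (x ∩ U) + c * μ x := add_le_add_right h _

lemma univ_cover {Y : Type*} [MeasurableSpace Y] (μ : Measure Y) (ε' : ℝ)
    {P : Finset (Set Y)} (hP : IsPartition P) (B : Set Y) :
    μ ((⋃ s ∈ P, s) ∩ B) ≥ (1 - ENNReal.ofReal ε') * μ B := by
  rw [hP.2.1, Set.univ_inter]
  calc (1 - ENNReal.ofReal ε') * μ B ≤ 1 * μ B := mul_le_mul_left tsub_le_self _
    _ = μ B := one_mul _

lemma covNum_le_card {Y : Type*} [MeasurableSpace Y] (μ : Measure Y) (ε' : ℝ)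
    {P : Finset (Set Y)} (hP : IsPartition P) (B : Set Y) :
    covNum μ ε' P B ≤ P.card :=
  Nat.sInf_le ⟨P, subset_rfl, rfl, univ_cover μ ε' hP B⟩

lemma covNum_witness {Y : Type*} [MeasurableSpace Y] (μ : Measure Y) (ε' : ℝ)
    {P : Finset (Set Y)} (hP : IsPartition P) (B : Set Y) :
    ∃ G ⊆ P, G.card = covNum μ ε' P B ∧
      μ ((⋃ s ∈ G, s) ∩ B) ≥ (1 - ENNReal.ofReal ε') * μ B := by
  have hne : {m | ∃ G ⊆ P, G.card = m ∧
      μ ((⋃ s ∈ G, s) ∩ B) ≥ (1 - ENNReal.ofReal ε') * μ B}.Nonempty :=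
    ⟨P.card, P, subset_rfl, rfl, univ_cover μ ε' hP B⟩
  obtain ⟨G, hG, hcard, hcov⟩ := Nat.sInf_mem hne
  exact ⟨G, hG, hcard, hcov⟩

theorem stmt4 {Y : Type*} [MeasurableSpace Y] (μ : Measure Y) [IsProbabilityMeasure μ]
    (A : Set Y) (hA : MeasurableSet A) (hApos : 0 < μ A)
    (P₁ P₂ P₃ : Finset (Set Y))
    (hP₁ : IsPartition P₁) (hP₂ : IsPartition P₂) (hP₃ : IsPartition P₃)
    (ε : ℝ) (hε : 0 < ε) (hε1 : ε < 1) :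
    relCovNum μ ε P₁ P₃ A
      ≤ relCovNum μ (ε ^ 2 / 6) P₁ P₂ A * relCovNum μ (ε ^ 2 / 6) P₂ P₃ A := by
  classical
  set δ := ε ^ 2 / 6 with hδdef
  set d := ENNReal.ofReal δ with hd
  set c := ENNReal.ofReal (ε - δ) with hc
  set e := ENNReal.ofReal ε with he
  have hδpos : 0 < δ := by positivity
  have hδltε : δ < ε := by rw [hδdef]; nlinarith
  have hδ1 : δ ≤ 1 := by rw [hδdef]; nlinarith
  have hkey : δ + δ ≤ (ε - δ) * (ε - δ) := by rw [hδdef]; nlinarith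
  have hd1 : d ≤ 1 := by rw [hd]; exact ENNReal.ofReal_le_one.mpr hδ1
  have hc0 : c ≠ 0 := (ENNReal.ofReal_pos.mpr (sub_pos.mpr hδltε)).ne'
  have hctop : c ≠ ⊤ := ENNReal.ofReal_ne_top
  have hdc : d + c = e := by
    rw [hd, hc, he, ← ENNReal.ofReal_add hδpos.le (sub_nonneg.mpr hδltε.le)]
    ring_nf
  have hddcc : d + d ≤ c * c := by
    rw [hd, hc, ← ENNReal.ofReal_add hδpos.le hδpos.le,
      ← ENNReal.ofReal_mul (sub_nonneg.mpr hδltε.le)]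
    exact ENNReal.ofReal_le_ofReal hkey
  have hAfin : ∀ x : Set Y, μ x ≠ ⊤ := fun x => measure_ne_top μ x
  have hmeas₁ : ∀ G : Finset (Set Y), G ⊆ P₁ → MeasurableSet (⋃ s ∈ G, s) :=
    fun G hG => MeasurableSet.biUnion G.countable_toSet fun s hs => hP₁.1 s (hG hs)
  have hmeas₂ : ∀ G : Finset (Set Y), G ⊆ P₂ → MeasurableSet (⋃ s ∈ G, s) :=
    fun G hG => MeasurableSet.biUnion G.countable_toSet fun s hs => hP₂.1 s (hG hs)
  have hmeas₃ : ∀ G : Finset (Set Y), G ⊆ P₃ → MeasurableSet (⋃ s ∈ G, s) :=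
    fun G hG => MeasurableSet.biUnion G.countable_toSet fun s hs => hP₃.1 s (hG hs)
  -- witnesses for the two relative covering numbers
  have hne₁₂ : {k | ∃ Q' ⊆ P₂, μ ((⋃ s ∈ Q', s) ∩ A) ≥ (1 - d) * μ A ∧
      ∀ q ∈ Q', covNum μ δ P₁ (A ∩ q) ≤ k}.Nonempty :=
    ⟨P₁.card, P₂, subset_rfl, univ_cover μ δ hP₂ A, fun q _ => covNum_le_card μ δ hP₁ _⟩
  obtain ⟨Q₂', hQ₂'P, hQ₂'cov, hQ₂'m⟩ :
      ∃ Q' ⊆ P₂, μ ((⋃ s ∈ Q', s) ∩ A) ≥ (1 - d) * μ A ∧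
        ∀ q ∈ Q', covNum μ δ P₁ (A ∩ q) ≤ relCovNum μ δ P₁ P₂ A := Nat.sInf_mem hne₁₂
  have hne₂₃ : {k | ∃ Q' ⊆ P₃, μ ((⋃ s ∈ Q', s) ∩ A) ≥ (1 - d) * μ A ∧
      ∀ q ∈ Q', covNum μ δ P₂ (A ∩ q) ≤ k}.Nonempty :=
    ⟨P₂.card, P₃, subset_rfl, univ_cover μ δ hP₃ A, fun q _ => covNum_le_card μ δ hP₂ _⟩
  obtain ⟨Q₃', hQ₃'P, hQ₃'cov, hQ₃'m⟩ :
      ∃ Q' ⊆ P₃, μ ((⋃ s ∈ Q', s) ∩ A) ≥ (1 - d) * μ A ∧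
        ∀ q ∈ Q', covNum μ δ P₂ (A ∩ q) ≤ relCovNum μ δ P₂ P₃ A := Nat.sInf_mem hne₂₃
  -- choose coverings
  have hGex : ∀ q : Set Y, ∃ G : Finset (Set Y), G ⊆ P₁ ∧
      G.card ≤ relCovNum μ δ P₁ P₂ A ∧
      (q ∈ Q₂' → (1 - d) * μ (A ∩ q) ≤ μ ((⋃ s ∈ G, s) ∩ (A ∩ q))) := by
    intro q
    by_cases hq : q ∈ Q₂'
    · obtain ⟨G, hG, hcard, hcov⟩ := covNum_witness μ δ hP₁ (A ∩ q)
      exact ⟨G, hG, hcard ▸ hQ₂'m q hq, fun _ => hcov⟩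
    · exact ⟨∅, Finset.empty_subset _, by simp, fun h => absurd h hq⟩
  choose 𝒢 h𝒢P h𝒢card h𝒢cov using hGex
  have hG'ex : ∀ r : Set Y, ∃ G : Finset (Set Y), G ⊆ P₂ ∧
      G.card ≤ relCovNum μ δ P₂ P₃ A ∧
      (r ∈ Q₃' → (1 - d) * μ (A ∩ r) ≤ μ ((⋃ s ∈ G, s) ∩ (A ∩ r))) := by
    intro r
    by_cases hr : r ∈ Q₃'
    · obtain ⟨G, hG, hcard, hcov⟩ := covNum_witness μ δ hP₂ (A ∩ r)
      exact ⟨G, hG, hcard ▸ hQ₃'m r hr, fun _ => hcov⟩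
    · exact ⟨∅, Finset.empty_subset _, by simp, fun h => absurd h hr⟩
  choose 𝒢' h𝒢'P h𝒢'card h𝒢'cov using hG'ex
  -- the exceptional set
  set E := A \ ⋃ q ∈ Q₂', ((⋃ s ∈ 𝒢 q, s) ∩ q) with hE
  have hEsub : E ⊆ (A \ ⋃ q ∈ Q₂', q) ∪ ⋃ q ∈ Q₂', ((A ∩ q) \ ⋃ s ∈ 𝒢 q, s) := by
    rintro x ⟨hxA, hx⟩
    by_cases hxb : x ∈ ⋃ q ∈ Q₂', q
    · right
      obtain ⟨q, hq, hxq⟩ := Set.mem_iUnion₂.mp hxb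
      refine Set.mem_iUnion₂.mpr ⟨q, hq, ⟨hxA, hxq⟩, fun hxs => hx ?_⟩
      exact Set.mem_iUnion₂.mpr ⟨q, hq, hxs, hxq⟩
    · exact Or.inl ⟨hxA, hxb⟩
  have hq_err : ∀ q ∈ Q₂', μ ((A ∩ q) \ ⋃ s ∈ 𝒢 q, s) ≤ d * μ (A ∩ q) := fun q hq =>
    measure_diff_le_of_inter μ (hmeas₁ _ (h𝒢P q)) hd1 (hAfin _) (h𝒢cov q hq)
  have hsum₂ : ∑ q ∈ Q₂', μ (A ∩ q) ≤ μ A := by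
    rw [← measure_biUnion_finset
      (fun q hq q' hq' hne =>
        ((hP₂.2.2 q (hQ₂'P hq) q' (hQ₂'P hq') hne).mono
          Set.inter_subset_right Set.inter_subset_right))
      (fun q hq => hA.inter (hP₂.1 q (hQ₂'P hq)))]
    exact measure_mono (Set.iUnion₂_subset fun q hq => Set.inter_subset_left)
  have hEbound : μ E ≤ d * μ A + d * μ A := by
    refine le_trans (measure_mono hEsub) (le_trans (measure_union_le _ _)
      (add_le_add (measure_diff_le_of_inter μ (hmeas₂ _ hQ₂'P) hd1 (hAfin A) hQ₂'cov) ?_))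
    calc μ (⋃ q ∈ Q₂', ((A ∩ q) \ ⋃ s ∈ 𝒢 q, s))
        ≤ ∑ q ∈ Q₂', μ ((A ∩ q) \ ⋃ s ∈ 𝒢 q, s) := measure_biUnion_finset_le _ _
      _ ≤ ∑ q ∈ Q₂', d * μ (A ∩ q) := Finset.sum_le_sum hq_err
      _ = d * ∑ q ∈ Q₂', μ (A ∩ q) := (Finset.mul_sum _ _ _).symm
      _ ≤ d * μ A := mul_le_mul_right hsum₂ d
  -- good and bad cells of Q₃'
  set Good := Q₃'.filter (fun r => μ (E ∩ r) ≤ c * μ (A ∩ r)) with hGood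
  have hGoodsub : Good ⊆ P₃ := (Finset.filter_subset _ _).trans hQ₃'P
  have hS : ∑ r ∈ Q₃' \ Good, μ (A ∩ r) ≤ c * μ A := by
    have h1 : c * ∑ r ∈ Q₃' \ Good, μ (A ∩ r) ≤ μ E := by
      calc c * ∑ r ∈ Q₃' \ Good, μ (A ∩ r)
          = ∑ r ∈ Q₃' \ Good, c * μ (A ∩ r) := Finset.mul_sum _ _ _
        _ ≤ ∑ r ∈ Q₃' \ Good, μ (E ∩ r) := by
            refine Finset.sum_le_sum fun r hr => ?_
            obtain ⟨hr₃, hrG⟩ := Finset.mem_sdiff.mp hr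
            have : ¬ μ (E ∩ r) ≤ c * μ (A ∩ r) := fun hle =>
              hrG (Finset.mem_filter.mpr ⟨hr₃, hle⟩)
            exact (not_le.mp this).le
        _ = μ (⋃ r ∈ Q₃' \ Good, (E ∩ r)) := by
            have hEm : MeasurableSet E := hA.diff
              (MeasurableSet.biUnion Q₂'.countable_toSet fun q hq =>
                (hmeas₁ _ (h𝒢P q)).inter (hP₂.1 q (hQ₂'P hq)))
            exact (measure_biUnion_finset
              (fun r hr r' hr' hne =>
                ((hP₃.2.2 r (hQ₃'P (Finset.mem_sdiff.mp hr).1) r'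
                    (hQ₃'P (Finset.mem_sdiff.mp hr').1) hne).mono
                  Set.inter_subset_right Set.inter_subset_right))
              (fun r hr => hEm.inter (hP₃.1 r (hQ₃'P (Finset.mem_sdiff.mp hr).1)))).symm
        _ ≤ μ E := measure_mono (Set.iUnion₂_subset fun r hr => Set.inter_subset_left)
    have h2 : c * ∑ r ∈ Q₃' \ Good, μ (A ∩ r) ≤ c * (c * μ A) := by
      refine h1.trans (hEbound.trans ?_)
      calc d * μ A + d * μ A = (d + d) * μ A := (add_mul _ _ _).symm
        _ ≤ (c * c) * μ A := mul_le_mul_left hddcc _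
        _ = c * (c * μ A) := mul_assoc _ _ _
    exact (ENNReal.mul_le_mul_iff_right hc0 hctop).mp h2
  have hAdiffGood : μ (A \ ⋃ r ∈ Good, r) ≤ e * μ A := by
    have hsub : A \ ⋃ r ∈ Good, r ⊆ (A \ ⋃ r ∈ Q₃', r) ∪ ⋃ r ∈ Q₃' \ Good, (A ∩ r) := by
      rintro x ⟨hxA, hx⟩
      by_cases hxb : x ∈ ⋃ r ∈ Q₃', r
      · right
        obtain ⟨r, hr, hxr⟩ := Set.mem_iUnion₂.mp hxb
        have hrG : r ∉ Good := fun hrG => hx (Set.mem_iUnion₂.mpr ⟨r, hrG, hxr⟩)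
        exact Set.mem_iUnion₂.mpr ⟨r, Finset.mem_sdiff.mpr ⟨hr, hrG⟩, hxA, hxr⟩
      · exact Or.inl ⟨hxA, hxb⟩
    calc μ (A \ ⋃ r ∈ Good, r)
        ≤ μ (A \ ⋃ r ∈ Q₃', r) + μ (⋃ r ∈ Q₃' \ Good, (A ∩ r)) :=
          (measure_mono hsub).trans (measure_union_le _ _)
      _ ≤ d * μ A + ∑ r ∈ Q₃' \ Good, μ (A ∩ r) :=
          add_le_add (measure_diff_le_of_inter μ (hmeas₃ _ hQ₃'P) hd1 (hAfin A) hQ₃'cov)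
            (measure_biUnion_finset_le _ _)
      _ ≤ d * μ A + c * μ A := add_le_add_right hS _
      _ = e * μ A := by rw [← add_mul, hdc]
  have hGoodcov : (1 - e) * μ A ≤ μ ((⋃ r ∈ Good, r) ∩ A) :=
    inter_ge_of_measure_diff_le μ (hmeas₃ _ hGoodsub) (hAfin A) hAdiffGood
  -- per-cell bound
  have hper : ∀ r ∈ Good, covNum μ ε P₁ (A ∩ r) ≤
      relCovNum μ δ P₁ P₂ A * relCovNum μ δ P₂ P₃ A := by
    intro r hrG
    obtain ⟨hrQ, hrE⟩ := Finset.mem_filter.mp hrG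
    set H : Finset (Set Y) := (𝒢' r ∩ Q₂').biUnion 𝒢 with hH
    have hHP : H ⊆ P₁ := Finset.biUnion_subset.mpr fun q _ => h𝒢P q
    have hHcard : H.card ≤ relCovNum μ δ P₁ P₂ A * relCovNum μ δ P₂ P₃ A := by
      calc H.card ≤ ∑ q ∈ 𝒢' r ∩ Q₂', (𝒢 q).card := Finset.card_biUnion_le
        _ ≤ (𝒢' r ∩ Q₂').card * relCovNum μ δ P₁ P₂ A := by
            simpa [smul_eq_mul] using
              Finset.sum_le_card_nsmul (𝒢' r ∩ Q₂') _ _ (fun q _ => h𝒢card q)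
        _ ≤ relCovNum μ δ P₂ P₃ A * relCovNum μ δ P₁ P₂ A :=
            Nat.mul_le_mul_right _
              ((Finset.card_le_card Finset.inter_subset_left).trans (h𝒢'card r))
        _ = relCovNum μ δ P₁ P₂ A * relCovNum μ δ P₂ P₃ A := Nat.mul_comm _ _
    have hsub : (A ∩ r) \ ⋃ s ∈ H, s ⊆ ((A ∩ r) \ ⋃ s ∈ 𝒢' r, s) ∪ (E ∩ r) := by
      rintro x ⟨hxAr, hx⟩
      by_cases hxg : x ∈ ⋃ s ∈ 𝒢' r, s
      · right
        obtain ⟨q, hq, hxq⟩ := Set.mem_iUnion₂.mp hxg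
        by_cases hxE : x ∈ E
        · exact ⟨hxE, hxAr.2⟩
        · exfalso
          have hxU : x ∈ ⋃ q' ∈ Q₂', ((⋃ s ∈ 𝒢 q', s) ∩ q') := by
            by_contra hcon
            exact hxE ⟨hxAr.1, hcon⟩
          obtain ⟨q', hq', hxq'⟩ := Set.mem_iUnion₂.mp hxU
          have hqq' : q = q' := by
            by_contra hne
            exact (Set.disjoint_left.mp
              (hP₂.2.2 q (h𝒢'P r hq) q' (hQ₂'P hq') hne) hxq) hxq'.2
          subst hqq'
          apply hx
          obtain ⟨s, hs, hxs⟩ := Set.mem_iUnion₂.mp hxq'.1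
          exact Set.mem_iUnion₂.mpr
            ⟨s, Finset.mem_biUnion.mpr ⟨q, Finset.mem_inter.mpr ⟨hq, hq'⟩, hs⟩, hxs⟩
      · exact Or.inl ⟨hxAr, hxg⟩
    have hcov : (1 - e) * μ (A ∩ r) ≤ μ ((⋃ s ∈ H, s) ∩ (A ∩ r)) := by
      apply inter_ge_of_measure_diff_le μ (hmeas₁ _ hHP) (hAfin _)
      calc μ ((A ∩ r) \ ⋃ s ∈ H, s)
          ≤ μ (((A ∩ r) \ ⋃ s ∈ 𝒢' r, s) ∪ (E ∩ r)) := measure_mono hsub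
        _ ≤ μ ((A ∩ r) \ ⋃ s ∈ 𝒢' r, s) + μ (E ∩ r) := measure_union_le _ _
        _ ≤ d * μ (A ∩ r) + c * μ (A ∩ r) :=
            add_le_add (measure_diff_le_of_inter μ (hmeas₂ _ (h𝒢'P r)) hd1 (hAfin _)
              (h𝒢'cov r hrQ)) hrE
        _ = e * μ (A ∩ r) := by rw [← add_mul, hdc]
    have hle : covNum μ ε P₁ (A ∩ r) ≤ H.card := Nat.sInf_le ⟨H, hHP, rfl, hcov⟩
    exact hle.trans hHcard
  exact Nat.sInf_le ⟨Good, hGoodsub, hGoodcov, hper⟩
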